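/- Let b ≥ 2 and k ≥ 1 be integers and ψ : ℕ × {0,…,k−1} → ℕ a bijection. Define E_ψ : [0,1) → [0,1)^k by E_ψ(x) = (x_0,…,x_{k−1}), where a is the canonical base-b expansion of x and x_j = ∑_{m≥0} a(ψ(m,j))·b^{−(m+1)} for each 0 ≤ j ≤ k−1. Then E_ψ is measurable and the pushforward of λ restricted to [0,1) under E_ψ equals the product of k copies of λ restricted to [0,1). -/

import Mathlib

open Finset MeasureTheory
open scoped ENNReal

/-- The real number in `[0,1]` represented by a base-`b` digit sequence `a`,
namely `∑_{k ≥ 0} a(k) · b^{-(k+1)}`. -/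
noncomputable def baseVal (b : ℕ) (a : ℕ → ℕ) : ℝ :=
  ∑' k : ℕ, (a k : ℝ) / (b : ℝ) ^ (k + 1)

/-- The `k`-th digit of the canonical base-`b` expansion of `x ∈ [0,1)`, i.e. of the unique
representing base-`b` digit sequence that is not eventually `b - 1`; it is given by the
standard formula `⌊x · b^(k+1)⌋ mod b`. -/
noncomputable def canonDigit (b : ℕ) (x : ℝ) (k : ℕ) : ℕ :=
  (⌊x * (b : ℝ) ^ (k + 1)⌋ % (b : ℤ)).toNat

/-- The split map `E_ψ : [0,1) → [0,1)^k` associated to a bijection `ψ : ℕ × {0,…,k−1} ≃ ℕ`: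
`E_ψ(x) = (x_0,…,x_{k−1})` where `a` is the canonical base-`b` expansion of `x` and
`x_j = ∑_{m ≥ 0} a(ψ(m,j)) · b^{−(m+1)}`. -/
noncomputable def splitMap (b k : ℕ) (ψ : ℕ × Fin k ≃ ℕ) (x : ℝ) : Fin k → ℝ :=
  fun j => baseVal b (fun m => canonDigit b x (ψ (m, j)))



lemma digits_sum_lt (n : ℕ) (f : ℕ → ℕ) (hf : ∀ q < n, f q < b) :
    ∑ q ∈ range n, f q * b ^ q < b ^ n := by
  have : (finFunctionFinEquiv (fun q : Fin n => (⟨f q, hf q q.isLt⟩ : Fin b)) : ℕ)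
      = ∑ q ∈ range n, f q * b ^ q := by
    rw [finFunctionFinEquiv_apply, Finset.sum_range]
  rw [← this]
  exact (finFunctionFinEquiv _).isLt

lemma digits_sum_div_mod (n : ℕ) (f : ℕ → ℕ) (hf : ∀ q < n, f q < b) {j : ℕ} (hj : j < n) :
    (∑ q ∈ range n, f q * b ^ q) / b ^ j % b = f j := by
  have h : (finFunctionFinEquiv (fun q : Fin n => (⟨f q, hf q q.isLt⟩ : Fin b)) : ℕ)
      = ∑ q ∈ range n, f q * b ^ q := by
    rw [finFunctionFinEquiv_apply, Finset.sum_range]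
  have h2 : ((finFunctionFinEquiv.symm (finFunctionFinEquiv
      (fun q : Fin n => (⟨f q, hf q q.isLt⟩ : Fin b)))) ⟨j, hj⟩ : ℕ)
      = (finFunctionFinEquiv (fun q : Fin n => (⟨f q, hf q q.isLt⟩ : Fin b)) : ℕ) / b ^ j % b :=
    rfl
  rw [Equiv.symm_apply_apply] at h2
  rw [← h, ← h2]

lemma digits_reconstruct {n c : ℕ} (hc : c < b ^ n) :
    ∑ q ∈ range n, (c / b ^ q % b) * b ^ q = c := by
  have h : ∀ q : Fin n, ((finFunctionFinEquiv.symm (⟨c, hc⟩ : Fin (b ^ n))) q : ℕ)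
      = c / b ^ (q : ℕ) % b := fun q => rfl
  have := finFunctionFinEquiv_apply (finFunctionFinEquiv.symm (⟨c, hc⟩ : Fin (b ^ n)))
  rw [Equiv.apply_symm_apply] at this
  calc ∑ q ∈ range n, (c / b ^ q % b) * b ^ q
      = ∑ q : Fin n, ((finFunctionFinEquiv.symm (⟨c, hc⟩ : Fin (b ^ n))) q : ℕ) * b ^ (q : ℕ) := by
        rw [Finset.sum_range]
        exact (Finset.sum_congr rfl fun q _ => by rw [h q]).symm
    _ = c := this.symm

open Classical in
lemma digits_count (N : ℕ) (S : Finset ℕ) (hS : ∀ q ∈ S, q < N) (e : ℕ → ℕ)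
    (he : ∀ q ∈ S, e q < b) :
    ((range (b ^ N)).filter (fun c => ∀ q ∈ S, c / b ^ q % b = e q)).card = b ^ (N - S.card) := by
  classical
  -- step 1 : as a Fintype card on Fin (b^N)
  have step1 : ((range (b ^ N)).filter (fun c => ∀ q ∈ S, c / b ^ q % b = e q)).card
      = Fintype.card {i : Fin (b ^ N) // ∀ q ∈ S, (i : ℕ) / b ^ q % b = e q} := by
    rw [Fintype.card_subtype, ← Nat.Iio_eq_range, ← Fin.map_valEmbedding_univ,
      Finset.filter_map, Finset.card_map]
    rfl
  rw [step1]
  -- step 2 : transfer along finFunctionFinEquiv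
  have e2 : {i : Fin (b ^ N) // ∀ q ∈ S, (i : ℕ) / b ^ q % b = e q}
      ≃ {f : Fin N → Fin b // ∀ q : Fin N, (q : ℕ) ∈ S → (f q : ℕ) = e q} := by
    refine (Equiv.subtypeEquiv finFunctionFinEquiv.symm ?_)
    intro i
    constructor
    · intro h q hq
      have := h q (by exact hq)
      exact this
    · intro h q hq
      have hqN : q < N := hS q hq
      exact h ⟨q, hqN⟩ hq
  rw [Fintype.card_congr e2, Fintype.card_congr (Equiv.subtypePiEquivPi (p := fun (q : Fin N) (v : Fin b) => (q : ℕ) ∈ S → (v : ℕ) = e q))]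
  rw [Fintype.card_pi]
  have hcard : ∀ q : Fin N, Fintype.card {v : Fin b // (q : ℕ) ∈ S → (v : ℕ) = e q}
      = if (q : ℕ) ∈ S then 1 else b := by
    intro q
    by_cases hq : (q : ℕ) ∈ S
    · rw [if_pos hq]
      refine Fintype.card_eq_one_iff.mpr ⟨⟨⟨e q, he q hq⟩, fun _ => rfl⟩, ?_⟩
      rintro ⟨v, hv⟩
      ext
      exact hv hq
    · rw [if_neg hq]
      rw [Fintype.card_congr (Equiv.subtypeUnivEquiv (fun v h => absurd h hq))]
      exact Fintype.card_fin b
  rw [Finset.prod_congr rfl (fun q _ => hcard q), Finset.prod_ite, Finset.prod_const_one,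
    Finset.prod_const, one_mul]
  congr 1
  have hmap : (univ.filter (fun q : Fin N => (q : ℕ) ∈ S)).map Fin.valEmbedding = S := by
    ext c
    simp only [Finset.mem_map, Finset.mem_filter, Finset.mem_univ, true_and,
      Fin.valEmbedding_apply]
    constructor
    · rintro ⟨a, ha, rfl⟩; exact ha
    · intro hc; exact ⟨⟨c, hS c hc⟩, hc, rfl⟩
  have h1 : (univ.filter (fun q : Fin N => (q : ℕ) ∈ S)).card = S.card := by
    conv_rhs => rw [← hmap]
    rw [Finset.card_map]
  have h2 : #(filter (fun q : Fin N => (q : ℕ) ∈ S) univ)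
      + #(filter (fun q : Fin N => (q : ℕ) ∉ S) univ) = N := by
    simpa using Finset.card_filter_add_card_filter_not
      (s := (univ : Finset (Fin N))) (p := fun q : Fin N => (q : ℕ) ∈ S)
  omega



variable {b : ℕ}

lemma canonDigit_lt (hb : 0 < b) (x : ℝ) (p : ℕ) : canonDigit b x p < b := by
  have h0 : (0:ℤ) < (b:ℤ) := by exact_mod_cast hb
  have := Int.emod_lt_of_pos (⌊x * (b : ℝ) ^ (p + 1)⌋) h0
  unfold canonDigit
  omega

lemma floor_pow_div (hb : 0 < b) (x : ℝ) {j n : ℕ} (h : j ≤ n) :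
    ⌊x * (b:ℝ) ^ j⌋ = ⌊x * (b:ℝ) ^ n⌋ / (b:ℤ) ^ (n - j) := by
  have hbR : (0:ℝ) < (b:ℝ) := by exact_mod_cast hb
  set z := ⌊x * (b:ℝ) ^ n⌋ with hz
  set m : ℤ := (b:ℤ) ^ (n - j) with hm
  have hm0 : (0:ℤ) < m := pow_pos (by exact_mod_cast hb) _
  have hmR : ((m:ℤ):ℝ) = (b:ℝ) ^ (n - j) := by rw [hm]; push_cast; ring
  have hsplit : (b:ℝ) ^ n = (b:ℝ) ^ j * (b:ℝ) ^ (n - j) := by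
    rw [← pow_add]; congr 1; omega
  have hzle : (z : ℝ) ≤ x * (b:ℝ) ^ n := Int.floor_le _
  have hzlt : x * (b:ℝ) ^ n < z + 1 := Int.lt_floor_add_one _
  have hdm := Int.mul_ediv_add_emod z m
  have hmod0 : 0 ≤ z % m := Int.emod_nonneg z (ne_of_gt hm0)
  have hmodlt : z % m < m := Int.emod_lt_of_pos z hm0
  rw [Int.floor_eq_iff]
  constructor
  · have h1 : ((z / m : ℤ) : ℝ) * (b:ℝ) ^ (n - j) ≤ (z:ℝ) := by
      rw [← hmR]
      have : (z / m) * m ≤ z := Int.ediv_mul_le z (ne_of_gt hm0)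
      exact_mod_cast this
    have h2 : ((z / m : ℤ) : ℝ) * (b:ℝ) ^ (n - j) ≤ x * (b:ℝ) ^ j * (b:ℝ) ^ (n - j) := by
      refine (h1.trans hzle).trans (le_of_eq ?_)
      rw [hsplit]; ring
    have hp : (0:ℝ) < (b:ℝ) ^ (n - j) := pow_pos hbR _
    exact le_of_mul_le_mul_right h2 hp
  · have h1 : (z:ℝ) + 1 ≤ (((z / m) + 1 : ℤ) : ℝ) * (b:ℝ) ^ (n - j) := by
      rw [← hmR]
      have : z + 1 ≤ (z / m + 1) * m := by nlinarith [hdm, hmod0, hmodlt]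
      exact_mod_cast this
    have e : x * (b:ℝ) ^ j * (b:ℝ) ^ (n - j) = x * (b:ℝ) ^ n := by rw [hsplit]; ring
    push_cast at h1
    have h2 : x * (b:ℝ) ^ j * (b:ℝ) ^ (n - j) < (((z / m : ℤ) : ℝ) + 1) * (b:ℝ)^(n-j) := by
      rw [e]; linarith
    have hp : (0:ℝ) < (b:ℝ) ^ (n - j) := pow_pos hbR _
    have := lt_of_mul_lt_mul_right h2 hp.le
    push_cast at this ⊢
    linarith

lemma canonDigit_eq_div_mod (hb : 0 < b) {x : ℝ} (hx : 0 ≤ x) {p N : ℕ} (h : p < N) :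
    canonDigit b x p = (⌊x * (b:ℝ) ^ N⌋.toNat) / b ^ (N - 1 - p) % b := by
  have hz : 0 ≤ ⌊x * (b:ℝ) ^ N⌋ := Int.floor_nonneg.mpr (by positivity)
  have hfd := floor_pow_div hb x (j := p + 1) (n := N) (by omega)
  unfold canonDigit
  rw [hfd]
  have hNp : N - (p + 1) = N - 1 - p := by omega
  rw [hNp]
  obtain ⟨c, hc⟩ := Int.eq_ofNat_of_zero_le hz
  rw [hc]
  have hpow : ((b:ℤ)) ^ (N - 1 - p) = ((b ^ (N - 1 - p) : ℕ) : ℤ) := by push_cast; ring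
  rw [hpow]
  norm_cast

lemma Ico_nat_disjoint {N : ℕ} (hbN : (0:ℝ) < (b:ℝ) ^ N) {c c' : ℕ} (hne : c ≠ c') :
    Disjoint (Set.Ico ((c:ℝ)/(b:ℝ)^N) (((c:ℝ)+1)/(b:ℝ)^N))
      (Set.Ico ((c':ℝ)/(b:ℝ)^N) (((c':ℝ)+1)/(b:ℝ)^N)) := by
  rw [Set.Ico_disjoint_Ico]
  rcases lt_or_gt_of_ne hne with h | h
  · have : ((c:ℝ)+1)/(b:ℝ)^N ≤ (c':ℝ)/(b:ℝ)^N := by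
      gcongr
      exact_mod_cast Nat.succ_le_of_lt h
    exact le_trans (min_le_left _ _) (this.trans (le_max_right _ _))
  · have : ((c':ℝ)+1)/(b:ℝ)^N ≤ (c:ℝ)/(b:ℝ)^N := by
      gcongr
      exact_mod_cast Nat.succ_le_of_lt h
    exact le_trans (min_le_right _ _) (this.trans (le_max_left _ _))

lemma measure_cylinder (hb : 2 ≤ b) (S : Finset ℕ) {N : ℕ} (hS : ∀ p ∈ S, p < N) (e : ℕ → ℕ)
    (he : ∀ p ∈ S, e p < b) :
    volume {x : ℝ | x ∈ Set.Ico (0:ℝ) 1 ∧ ∀ p ∈ S, canonDigit b x p = e p}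
      = ((b:ℝ≥0∞))⁻¹ ^ S.card := by
  classical
  have hb0 : 0 < b := by omega
  have hbR : (0:ℝ) < (b:ℝ) := by exact_mod_cast hb0
  have hbN : (0:ℝ) < (b:ℝ) ^ N := pow_pos hbR N
  set T : Finset ℕ :=
    (range (b ^ N)).filter (fun c => ∀ p ∈ S, c / b ^ (N - 1 - p) % b = e p) with hT
  have hset : {x : ℝ | x ∈ Set.Ico (0:ℝ) 1 ∧ ∀ p ∈ S, canonDigit b x p = e p}
      = ⋃ c ∈ T, Set.Ico ((c:ℝ)/(b:ℝ)^N) (((c:ℝ)+1)/(b:ℝ)^N) := by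
    ext x
    simp only [Set.mem_setOf_eq, Set.mem_iUnion, hT, mem_filter, mem_range, exists_prop,
      Set.mem_Ico]
    constructor
    · rintro ⟨⟨hx0, hx1⟩, hd⟩
      refine ⟨⌊x * (b:ℝ)^N⌋.toNat, ⟨?_, ?_⟩, ?_, ?_⟩
      · have h1 : x * (b:ℝ)^N < (((b ^ N : ℕ) : ℤ) : ℝ) := by
          push_cast
          nlinarith
        have h2 := Int.floor_lt.mpr h1
        have h3 : 0 < b ^ N := pow_pos hb0 N
        omega
      · intro p hp
        rw [← canonDigit_eq_div_mod hb0 hx0 (hS p hp)]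
        exact hd p hp
      · rw [div_le_iff₀ hbN]
        have h0 : (0:ℤ) ≤ ⌊x * (b:ℝ)^N⌋ := Int.floor_nonneg.mpr (by positivity)
        calc ((⌊x * (b:ℝ)^N⌋.toNat : ℕ) : ℝ) = ((⌊x * (b:ℝ)^N⌋ : ℤ) : ℝ) := by
              exact_mod_cast congrArg (fun z : ℤ => (z : ℝ)) (Int.toNat_of_nonneg h0)
          _ ≤ x * (b:ℝ)^N := Int.floor_le _
      · rw [lt_div_iff₀ hbN]
        have h0 : (0:ℤ) ≤ ⌊x * (b:ℝ)^N⌋ := Int.floor_nonneg.mpr (by positivity)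
        have := Int.lt_floor_add_one (x * (b:ℝ)^N)
        have hcast : ((⌊x * (b:ℝ)^N⌋.toNat : ℕ) : ℝ) = ((⌊x * (b:ℝ)^N⌋ : ℤ) : ℝ) := by
          exact_mod_cast congrArg (fun z : ℤ => (z : ℝ)) (Int.toNat_of_nonneg h0)
        rw [hcast]
        linarith
    · rintro ⟨c, ⟨hcr, hcond⟩, hm1, hm2⟩
      have hx0 : (0:ℝ) ≤ x := le_trans (by positivity) hm1
      have hx1 : x < 1 := by
        refine hm2.trans_le ?_
        rw [div_le_one hbN]
        have : (c:ℝ) + 1 ≤ ((b^N : ℕ):ℝ) := by exact_mod_cast Nat.succ_le_of_lt hcr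
        push_cast at this ⊢
        linarith
      have hfl : ⌊x * (b:ℝ)^N⌋ = (c : ℤ) := by
        rw [Int.floor_eq_iff]
        rw [div_le_iff₀ hbN] at hm1
        rw [lt_div_iff₀ hbN] at hm2
        constructor
        · exact_mod_cast hm1
        · push_cast
          push_cast at hm2
          linarith
      refine ⟨⟨hx0, hx1⟩, fun p hp => ?_⟩
      rw [canonDigit_eq_div_mod hb0 hx0 (hS p hp), hfl]
      simpa using hcond p hp
  rw [hset, measure_biUnion_finset ?_ (fun c _ => measurableSet_Ico)]
  · have hvol : ∀ c : ℕ, volume (Set.Ico ((c:ℝ)/(b:ℝ)^N) (((c:ℝ)+1)/(b:ℝ)^N))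
        = ENNReal.ofReal (1/(b:ℝ)^N) := by
      intro c
      rw [Real.volume_Ico]
      congr 1
      field_simp
      ring
    rw [Finset.sum_congr rfl (fun c _ => hvol c), Finset.sum_const]
    -- count T
    have hScard : S.card ≤ N := by
      have : S ⊆ range N := fun p hp => mem_range.mpr (hS p hp)
      simpa using Finset.card_le_card this
    have hcount : T.card = b ^ (N - S.card) := by
      have hinj : Set.InjOn (fun p => N - 1 - p) S := by
        intro p hp q hq hpq
        have := hS p hp; have := hS q hq
        simp only at hpq
        omega
      have hiff : ∀ c, (∀ p ∈ S, c / b ^ (N - 1 - p) % b = e p)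
          ↔ (∀ q ∈ S.image (fun p => N - 1 - p), c / b ^ q % b = e (N - 1 - q)) := by
        intro c
        constructor
        · rintro h q hq
          obtain ⟨p, hp, rfl⟩ := Finset.mem_image.mp hq
          have hpN := hS p hp
          have : N - 1 - (N - 1 - p) = p := by omega
          rw [this]
          exact h p hp
        · intro h p hp
          have hpN := hS p hp
          have := h (N - 1 - p) (Finset.mem_image_of_mem _ hp)
          have h2 : N - 1 - (N - 1 - p) = p := by omega
          rwa [h2] at this
      rw [hT]
      rw [Finset.filter_congr (fun c _ => by rw [hiff c])]
      rw [digits_count (b := b) N (S.image (fun p => N - 1 - p))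
        (by intro q hq; obtain ⟨p, hp, rfl⟩ := Finset.mem_image.mp hq; have := hS p hp; omega)
        (fun q => e (N - 1 - q))
        (by intro q hq; obtain ⟨p, hp, rfl⟩ := Finset.mem_image.mp hq
            have hpN := hS p hp
            have h2 : N - 1 - (N - 1 - p) = p := by omega
            simpa [h2] using he p hp)]
      rw [Finset.card_image_of_injOn hinj]
    rw [hcount]
    -- arithmetic in ℝ≥0∞
    have hbne : (b:ℝ≥0∞) ≠ 0 := by
      simp only [ne_eq, Nat.cast_eq_zero]
      omega
    have hbtop : (b:ℝ≥0∞) ≠ ⊤ := ENNReal.natCast_ne_top b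
    have hof : ENNReal.ofReal (1/(b:ℝ)^N) = ((b:ℝ≥0∞) ^ N)⁻¹ := by
      rw [one_div, ENNReal.ofReal_inv_of_pos hbN]
      congr 1
      rw [ENNReal.ofReal_pow hbR.le, ENNReal.ofReal_natCast]
    rw [hof, nsmul_eq_mul]
    push_cast
    have hsplitN : (b:ℝ≥0∞) ^ N = (b:ℝ≥0∞) ^ (N - S.card) * (b:ℝ≥0∞) ^ S.card := by
      rw [← pow_add]
      congr 1
      omega
    rw [hsplitN, ENNReal.mul_inv (Or.inl (pow_ne_zero _ hbne)) (Or.inl (ENNReal.pow_ne_top hbtop)),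
      ← mul_assoc, ENNReal.mul_inv_cancel (pow_ne_zero _ hbne) (ENNReal.pow_ne_top hbtop), one_mul,
      ENNReal.inv_pow]
  · intro c hc c' hc' hne
    exact Ico_nat_disjoint hbN hne

section baseValLemmas
variable {a : ℕ → ℕ}

lemma one_lt_bR (hb : 2 ≤ b) : (1:ℝ) < (b:ℝ) := by exact_mod_cast hb.trans_lt' one_lt_two

lemma summable_digits (hb : 2 ≤ b) (ha : ∀ m, a m < b) :
    Summable (fun m : ℕ => (a m : ℝ) / (b:ℝ) ^ (m + 1)) := by
  have hbR : (1:ℝ) < (b:ℝ) := one_lt_bR hb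
  have h0 : (0:ℝ) < (b:ℝ) := by linarith
  have hr1 : (b:ℝ)⁻¹ < 1 := inv_lt_one_of_one_lt₀ hbR
  have hr0 : (0:ℝ) ≤ (b:ℝ)⁻¹ := by positivity
  have hgeo : Summable (fun m : ℕ => ((b:ℝ) * (b:ℝ)⁻¹) * ((b:ℝ)⁻¹) ^ m) :=
    (summable_geometric_of_lt_one hr0 hr1).mul_left _
  refine Summable.of_nonneg_of_le (fun m => by positivity) (fun m => ?_) hgeo
  have hle : (a m : ℝ) ≤ (b:ℝ) := by
    have := (ha m).le
    exact_mod_cast this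
  calc (a m : ℝ) / (b:ℝ) ^ (m+1) ≤ (b:ℝ) / (b:ℝ)^(m+1) := by gcongr
    _ = ((b:ℝ) * (b:ℝ)⁻¹) * ((b:ℝ)⁻¹) ^ m := by
        rw [div_eq_mul_inv, ← inv_pow, pow_succ']
        ring

lemma tsum_bconst (hb : 2 ≤ b) : ∑' m : ℕ, ((b:ℝ) - 1) * ((b:ℝ)⁻¹) ^ (m+1) = 1 := by
  have hbR : (1:ℝ) < (b:ℝ) := one_lt_bR hb
  have h0 : (0:ℝ) < (b:ℝ) := by linarith
  have hr1 : (b:ℝ)⁻¹ < 1 := inv_lt_one_of_one_lt₀ hbR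
  have hr0 : (0:ℝ) ≤ (b:ℝ)⁻¹ := by positivity
  have h1 : ∑' m : ℕ, ((b:ℝ) - 1) * ((b:ℝ)⁻¹) ^ (m+1)
      = (((b:ℝ) - 1) * (b:ℝ)⁻¹) * ∑' m : ℕ, ((b:ℝ)⁻¹) ^ m := by
    rw [← tsum_mul_left]
    congr 1
    funext m
    rw [pow_succ']
    ring
  rw [h1, tsum_geometric_of_lt_one hr0 hr1]
  rw [show (1 - (b:ℝ)⁻¹) = ((b:ℝ) - 1) * (b:ℝ)⁻¹ by field_simp]
  rw [mul_inv_cancel₀ (mul_ne_zero (by linarith : (b:ℝ) - 1 ≠ 0) (inv_ne_zero (by linarith)))]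


lemma summable_bconst (hb : 2 ≤ b) :
    Summable (fun m : ℕ => ((b:ℝ) - 1) * ((b:ℝ)⁻¹) ^ (m+1)) := by
  have hbR : (1:ℝ) < (b:ℝ) := one_lt_bR hb
  have hr1 : (b:ℝ)⁻¹ < 1 := inv_lt_one_of_one_lt₀ hbR
  have hr0 : (0:ℝ) ≤ (b:ℝ)⁻¹ := by positivity
  have := (summable_geometric_of_lt_one hr0 hr1).mul_left (((b:ℝ) - 1) * (b:ℝ)⁻¹)
  refine this.congr (fun m => ?_)
  rw [pow_succ']
  ring

lemma digit_term_le (hb : 2 ≤ b) (ha : ∀ m, a m < b) (m : ℕ) :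
    (a m : ℝ) / (b:ℝ) ^ (m + 1) ≤ ((b:ℝ) - 1) * ((b:ℝ)⁻¹) ^ (m+1) := by
  have hbR : (1:ℝ) < (b:ℝ) := one_lt_bR hb
  have hle : (a m : ℝ) ≤ (b:ℝ) - 1 := by
    have ham := ha m
    have h1 : a m ≤ b - 1 := by omega
    have h2 : ((a m : ℕ) : ℝ) ≤ ((b - 1 : ℕ) : ℝ) := by exact_mod_cast h1
    have h3 : ((b - 1 : ℕ) : ℝ) = (b:ℝ) - 1 := by
      have : 1 ≤ b := by omega
      push_cast [this]
      ring
    linarith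
  rw [div_eq_mul_inv, ← inv_pow]
  have : (0:ℝ) ≤ ((b:ℝ)⁻¹) ^ (m+1) := by positivity
  exact mul_le_mul_of_nonneg_right hle this

lemma baseVal_nonneg : 0 ≤ baseVal b a :=
  tsum_nonneg (fun m => by positivity)

lemma baseVal_le_one (hb : 2 ≤ b) (ha : ∀ m, a m < b) : baseVal b a ≤ 1 := by
  rw [← tsum_bconst hb]
  exact Summable.tsum_le_tsum (digit_term_le hb ha) (summable_digits hb ha) (summable_bconst hb)

lemma all_digits_eq_of_one_le (hb : 2 ≤ b) (ha : ∀ m, a m < b) (h : 1 ≤ baseVal b a) :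
    ∀ m, a m = b - 1 := by
  intro m0
  have hsum := summable_digits hb ha
  have hg : Summable (fun m : ℕ => ((b:ℝ) - 1) * ((b:ℝ)⁻¹) ^ (m+1)
      - (a m : ℝ) / (b:ℝ) ^ (m + 1)) := (summable_bconst hb).sub hsum
  have htsum : ∑' m : ℕ, (((b:ℝ) - 1) * ((b:ℝ)⁻¹) ^ (m+1) - (a m : ℝ) / (b:ℝ) ^ (m + 1))
      = 1 - baseVal b a := by
    rw [Summable.tsum_sub (summable_bconst hb) hsum, tsum_bconst hb]
    rfl
  have hnonneg : ∀ m, 0 ≤ ((b:ℝ) - 1) * ((b:ℝ)⁻¹) ^ (m+1) - (a m : ℝ) / (b:ℝ) ^ (m + 1) :=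
    fun m => sub_nonneg.mpr (digit_term_le hb ha m)
  have hle := Summable.le_tsum hg m0 (fun m _ => hnonneg m)
  rw [htsum] at hle
  have h0 : ((b:ℝ) - 1) * ((b:ℝ)⁻¹) ^ (m0+1) - (a m0 : ℝ) / (b:ℝ) ^ (m0 + 1) = 0 :=
    le_antisymm (by linarith) (hnonneg m0)
  have hbR : (1:ℝ) < (b:ℝ) := one_lt_bR hb
  have hbne : (b:ℝ) ≠ 0 := by linarith
  have : (a m0 : ℝ) = (b:ℝ) - 1 := by
    rw [sub_eq_zero] at h0
    rw [div_eq_mul_inv, ← inv_pow] at h0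
    have hpow : ((b:ℝ)⁻¹) ^ (m0+1) ≠ 0 := by positivity
    field_simp at h0
    try exact h0
    try linarith
  have : ((a m0 : ℕ) : ℝ) = ((b - 1 : ℕ) : ℝ) := by
    rw [this]
    have h1 : 1 ≤ b := by omega
    push_cast [h1]
    ring
  exact_mod_cast this

lemma baseVal_split (hb : 2 ≤ b) (ha : ∀ m, a m < b) (n : ℕ) :
    baseVal b a = ((∑ m ∈ range n, a m * b ^ (n - 1 - m) : ℕ) : ℝ) / (b:ℝ) ^ n
      + baseVal b (fun m => a (m + n)) / (b:ℝ) ^ n := by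
  have hbR : (1:ℝ) < (b:ℝ) := one_lt_bR hb
  have h0 : (0:ℝ) < (b:ℝ) := by linarith
  have hsum := summable_digits hb ha
  have hsplit := (Summable.sum_add_tsum_nat_add (f := fun m => (a m : ℝ) / (b:ℝ) ^ (m + 1)) n hsum).symm
  rw [baseVal, hsplit]
  congr 1
  · rw [Nat.cast_sum, Finset.sum_div]
    refine Finset.sum_congr rfl (fun m hm => ?_)
    have hmn : m < n := mem_range.mp hm
    have hpow : (b:ℝ) ^ n = (b:ℝ) ^ (n - 1 - m) * (b:ℝ) ^ (m + 1) := by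
      rw [← pow_add]
      congr 1
      omega
    push_cast
    rw [hpow]
    field_simp
  · rw [baseVal, ← tsum_div_const]
    refine tsum_congr (fun i => ?_)
    have hpow : (b:ℝ) ^ (i + n + 1) = (b:ℝ) ^ (i + 1) * (b:ℝ) ^ n := by
      rw [← pow_add]
      congr 1
      omega
    rw [div_div, ← hpow]

end baseValLemmas

lemma bigSum_eq (n : ℕ) (f : ℕ → ℕ) :
    ∑ m ∈ range n, f m * b ^ (n - 1 - m) = ∑ j ∈ range n, f (n - 1 - j) * b ^ j := by
  rw [← Finset.sum_range_reflect]
  refine Finset.sum_congr rfl fun j hj => ?_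
  have hj' := mem_range.mp hj
  congr 2
  omega

lemma big_digits_lt (n : ℕ) (f : ℕ → ℕ) (hf : ∀ m, f m < b) :
    ∑ m ∈ range n, f m * b ^ (n - 1 - m) < b ^ n := by
  rw [bigSum_eq]
  exact digits_sum_lt n _ (fun q _ => hf _)

lemma big_digits_div_mod (n : ℕ) (f : ℕ → ℕ) (hf : ∀ m, f m < b) {m : ℕ} (hm : m < n) :
    (∑ m' ∈ range n, f m' * b ^ (n - 1 - m')) / b ^ (n - 1 - m) % b = f m := by
  rw [bigSum_eq]
  have h := digits_sum_div_mod n (fun j => f (n - 1 - j)) (fun q _ => hf _)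
    (j := n - 1 - m) (by omega)
  have h2 : (∑ j ∈ range n, f (n - 1 - j) * b ^ j) / b ^ (n - 1 - m) % b
      = f (n - 1 - (n - 1 - m)) := h
  rw [show n - 1 - (n - 1 - m) = m by omega] at h2
  exact h2

lemma big_digits_reconstruct {n d : ℕ} (hd : d < b ^ n) :
    ∑ m ∈ range n, (d / b ^ (n - 1 - m) % b) * b ^ (n - 1 - m) = d := by
  rw [bigSum_eq]
  have : ∀ j ∈ range n, (d / b ^ (n - 1 - (n - 1 - j)) % b) * b ^ j
      = (d / b ^ j % b) * b ^ j := by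
    intro j hj
    have := mem_range.mp hj
    rw [show n - 1 - (n - 1 - j) = j by omega]
  rw [Finset.sum_congr rfl this]
  exact digits_reconstruct hd

lemma measure_tail_zero (hb : 2 ≤ b) (g : ℕ → ℕ) (hg : Function.Injective g) :
    volume {x : ℝ | x ∈ Set.Ico (0:ℝ) 1 ∧ ∀ m, canonDigit b x (g m) = b - 1} = 0 := by
  classical
  have hb0 : 0 < b := by omega
  have key : ∀ M : ℕ,
      volume {x : ℝ | x ∈ Set.Ico (0:ℝ) 1 ∧ ∀ m, canonDigit b x (g m) = b - 1}
        ≤ ((b:ℝ≥0∞))⁻¹ ^ M := by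
    intro M
    set S : Finset ℕ := (range M).image g with hS
    have hcard : S.card = M := by
      rw [hS, Finset.card_image_of_injective _ hg, Finset.card_range]
    have hN : ∀ p ∈ S, p < S.sup id + 1 := by
      intro p hp
      have := Finset.le_sup (f := id) hp
      simp only [id] at this
      omega
    have hcyl := measure_cylinder hb S hN (fun _ => b - 1) (fun p _ => Nat.sub_lt (by omega) one_pos)
    rw [hcard] at hcyl
    rw [← hcyl]
    apply measure_mono
    rintro x ⟨hx, hd⟩
    refine ⟨hx, fun p hp => ?_⟩
    obtain ⟨m, _, rfl⟩ := Finset.mem_image.mp hp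
    exact hd m
  have hlt : ((b:ℝ≥0∞))⁻¹ < 1 := by
    rw [ENNReal.inv_lt_one]
    exact_mod_cast Nat.one_lt_cast.mpr (by omega)
  have htend := ENNReal.tendsto_pow_atTop_nhds_zero_of_lt_one hlt
  exact le_antisymm (ge_of_tendsto' htend key) zero_le

lemma measurable_baseVal_digits (hb : 2 ≤ b) (g : ℕ → ℕ) :
    Measurable (fun x : ℝ => baseVal b (fun m => canonDigit b x (g m))) := by
  have hb0 : 0 < b := by omega
  have hdig : ∀ p : ℕ, Measurable (fun x : ℝ => ((canonDigit b x p : ℕ) : ℝ)) := by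
    intro p
    have h1 : Measurable (fun x : ℝ => ⌊x * (b:ℝ) ^ (p + 1)⌋) :=
      Int.measurable_floor.comp (measurable_id.mul_const _)
    exact (measurable_from_top (f := fun z : ℤ => (((z % (b:ℤ)).toNat : ℕ) : ℝ))).comp h1
  have hF : ∀ N : ℕ, Measurable (fun x : ℝ =>
      ∑ m ∈ range N, ((canonDigit b x (g m) : ℕ) : ℝ) / (b:ℝ) ^ (m + 1)) := by
    intro N
    apply Finset.measurable_sum
    intro m _
    exact (hdig (g m)).div_const _
  apply measurable_of_tendsto_metrizable hF
  rw [tendsto_pi_nhds]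
  intro x
  exact (summable_digits hb (fun m => canonDigit_lt hb0 x (g m))).hasSum.tendsto_sum_nat

def baseInts (b : ℕ) : Set (Set ℝ) :=
  {s : Set ℝ | ∃ (n : ℕ) (c : ℤ), s = Set.Ico ((c:ℝ)/(b:ℝ)^n) (((c:ℝ)+1)/(b:ℝ)^n)}

lemma mem_I_iff (hb0 : 0 < b) {n : ℕ} {c : ℤ} {x : ℝ} :
    x ∈ Set.Ico ((c:ℝ)/(b:ℝ)^n) (((c:ℝ)+1)/(b:ℝ)^n) ↔ ⌊x * (b:ℝ)^n⌋ = c := by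
  have hbN : (0:ℝ) < (b:ℝ)^n := pow_pos (by exact_mod_cast hb0) n
  rw [Set.mem_Ico, Int.floor_eq_iff, div_le_iff₀ hbN, lt_div_iff₀ hbN]

lemma isPiSystem_baseInts (hb0 : 0 < b) : IsPiSystem (baseInts b) := by
  rintro s ⟨n, c, rfl⟩ t ⟨n', c', rfl⟩ hne
  obtain ⟨y, hy1, hy2⟩ := hne
  rcases le_total n n' with h | h
  · have hsub : Set.Ico ((c':ℝ)/(b:ℝ)^n') (((c':ℝ)+1)/(b:ℝ)^n')
        ⊆ Set.Ico ((c:ℝ)/(b:ℝ)^n) (((c:ℝ)+1)/(b:ℝ)^n) := by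
      intro z hz
      rw [mem_I_iff hb0] at hz hy1 hy2 ⊢
      rw [floor_pow_div hb0 z h, hz, ← hy2, ← floor_pow_div hb0 y h, hy1]
    rw [Set.inter_eq_self_of_subset_right hsub]
    exact ⟨n', c', rfl⟩
  · have hsub : Set.Ico ((c:ℝ)/(b:ℝ)^n) (((c:ℝ)+1)/(b:ℝ)^n)
        ⊆ Set.Ico ((c':ℝ)/(b:ℝ)^n') (((c':ℝ)+1)/(b:ℝ)^n') := by
      intro z hz
      rw [mem_I_iff hb0] at hz hy1 hy2 ⊢
      rw [floor_pow_div hb0 z h, hz, ← hy1, ← floor_pow_div hb0 y h, hy2]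
    rw [Set.inter_eq_self_of_subset_left hsub]
    exact ⟨n, c, rfl⟩

lemma generateFrom_baseInts (hb : 2 ≤ b) :
    MeasurableSpace.generateFrom (baseInts b) = Real.measurableSpace := by
  have hb0 : 0 < b := by omega
  have hbR : (1:ℝ) < (b:ℝ) := one_lt_bR hb
  apply le_antisymm
  · apply MeasurableSpace.generateFrom_le
    rintro s ⟨n, c, rfl⟩
    exact measurableSet_Ico
  · rw [show (Real.measurableSpace : MeasurableSpace ℝ) = borel ℝ from rfl,
      borel_eq_generateFrom_Iio ℝ]
    apply MeasurableSpace.generateFrom_le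
    rintro s ⟨q, rfl⟩
    have hset : Set.Iio q = ⋃ (n : ℕ) (c : ℤ) (_ : ((c:ℝ)+1)/(b:ℝ)^n ≤ q),
        Set.Ico ((c:ℝ)/(b:ℝ)^n) (((c:ℝ)+1)/(b:ℝ)^n) := by
      ext x
      simp only [Set.mem_Iio, Set.mem_iUnion, exists_prop]
      constructor
      · intro hx
        obtain ⟨n, hn⟩ := exists_pow_lt_of_lt_one (sub_pos.mpr hx) (by
          rw [inv_lt_one_iff₀]; right; exact hbR)
        refine ⟨n, ⌊x * (b:ℝ)^n⌋, ?_, (mem_I_iff hb0).mpr rfl⟩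
        have hbN : (0:ℝ) < (b:ℝ)^n := pow_pos (by linarith) n
        rw [div_le_iff₀ hbN]
        have h1 : (⌊x * (b:ℝ)^n⌋ : ℝ) ≤ x * (b:ℝ)^n := Int.floor_le _
        have h2 : ((b:ℝ)⁻¹)^n = ((b:ℝ)^n)⁻¹ := inv_pow _ _
        rw [h2] at hn
        have h4 : (1:ℝ) < (q - x) * (b:ℝ)^n := by
          have := mul_lt_mul_of_pos_right hn hbN
          rwa [inv_mul_cancel₀ (ne_of_gt hbN)] at this
        push_cast
        nlinarith
      · rintro ⟨n, c, hle, hmem⟩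
        exact lt_of_lt_of_le hmem.2 hle
    rw [hset]
    refine MeasurableSet.iUnion (fun n => MeasurableSet.iUnion (fun c =>
      MeasurableSet.iUnion (fun _ => MeasurableSpace.measurableSet_generateFrom ⟨n, c, rfl⟩)))

lemma ofReal_one_div_pow (hb : 2 ≤ b) (n : ℕ) :
    ENNReal.ofReal (1/(b:ℝ)^n) = ((b:ℝ≥0∞))⁻¹ ^ n := by
  have hbR : (0:ℝ) < (b:ℝ) := by have := one_lt_bR hb; linarith
  have hbN : (0:ℝ) < (b:ℝ)^n := pow_pos hbR n
  rw [one_div, ENNReal.ofReal_inv_of_pos hbN, ENNReal.ofReal_pow hbR.le,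
    ENNReal.ofReal_natCast, ENNReal.inv_pow]

noncomputable def spanningBaseInts (hb : 2 ≤ b) :
    (volume.restrict (Set.Ico (0:ℝ) 1)).FiniteSpanningSetsIn (baseInts b) where
  set m := Set.Ico (((Denumerable.ofNat ℤ m : ℤ):ℝ)/(b:ℝ)^0)
    ((((Denumerable.ofNat ℤ m : ℤ):ℝ)+1)/(b:ℝ)^0)
  set_mem m := ⟨0, Denumerable.ofNat ℤ m, rfl⟩
  finite m := by
    calc (volume.restrict (Set.Ico (0:ℝ) 1)) _
        ≤ (volume.restrict (Set.Ico (0:ℝ) 1)) Set.univ := measure_mono (Set.subset_univ _)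
      _ = volume (Set.Ico (0:ℝ) 1) := Measure.restrict_apply_univ _
      _ < ⊤ := by rw [Real.volume_Ico]; exact ENNReal.ofReal_lt_top
  spanning := by
    ext x
    simp only [Set.mem_iUnion, Set.mem_univ, iff_true, pow_zero, div_one, Set.mem_Ico]
    refine ⟨Encodable.encode ⌊x⌋, ?_⟩
    rw [Denumerable.ofNat_encode]
    exact ⟨Int.floor_le x, Int.lt_floor_add_one x⟩

/-- Let `b ≥ 2` and `k ≥ 1` be integers and `ψ : ℕ × {0,…,k−1} → ℕ` a
bijection. Then `E_ψ` is measurable and the pushforward of `λ` restricted to `[0,1)` under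
`E_ψ` equals the product of `k` copies of `λ` restricted to `[0,1)`. -/
theorem splitMap_measurePreserving (b k : ℕ) (hb : 2 ≤ b) (hk : 1 ≤ k)
    (ψ : ℕ × Fin k ≃ ℕ) :
    Measurable (splitMap b k ψ) ∧
    Measure.map (splitMap b k ψ) (volume.restrict (Set.Ico (0 : ℝ) 1))
      = Measure.pi (fun _ : Fin k => volume.restrict (Set.Ico (0 : ℝ) 1)) := by
  classical
  have hb0 : 0 < b := by omega
  have hbR : (1:ℝ) < (b:ℝ) := one_lt_bR hb
  have hmeas : Measurable (splitMap b k ψ) :=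
    measurable_pi_lambda _ (fun j => measurable_baseVal_digits hb (fun m => ψ (m, j)))
  refine ⟨hmeas, ?_⟩
  refine (Measure.pi_eq_generateFrom (C := fun _ : Fin k => baseInts b)
    (fun _ => generateFrom_baseInts hb) (fun _ => isPiSystem_baseInts hb0)
    (fun _ => spanningBaseInts hb) ?_).symm
  intro s hs
  choose n c hsc using hs
  have hps : MeasurableSet (Set.pi Set.univ s) :=
    MeasurableSet.univ_pi (fun i => by rw [hsc i]; exact measurableSet_Ico)
  rw [Measure.map_apply hmeas hps, Measure.restrict_apply (hmeas hps)]
  have hBpos : ∀ i : Fin k, (0:ℝ) < (b:ℝ) ^ (n i) := fun i => pow_pos (by linarith) _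
  by_cases hgood : ∀ i, 0 ≤ c i ∧ c i < (b:ℤ) ^ (n i)
  · -- all intervals inside [0,1)
    set d : Fin k → ℕ := fun i => (c i).toNat with hd
    have hdc : ∀ i, ((d i : ℤ)) = c i := fun i => Int.toNat_of_nonneg (hgood i).1
    have hdlt : ∀ i, d i < b ^ (n i) := by
      intro i
      have h2 := (hgood i).2
      rw [← hdc i] at h2
      have : ((b:ℤ)) ^ (n i) = ((b ^ (n i) : ℕ) : ℤ) := by push_cast; ring
      rw [this] at h2
      exact_mod_cast h2
    have hdR : ∀ i, ((c i : ℤ):ℝ) = ((d i : ℕ):ℝ) := by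
      intro i
      rw [← hdc i]
      push_cast
      ring
    -- RHS
    have hfac : ∀ i : Fin k, (volume.restrict (Set.Ico (0:ℝ) 1)) (s i)
        = ((b:ℝ≥0∞))⁻¹ ^ (n i) := by
      intro i
      rw [hsc i, Measure.restrict_apply measurableSet_Ico]
      have hsub : Set.Ico ((c i:ℝ)/(b:ℝ)^(n i)) (((c i:ℝ)+1)/(b:ℝ)^(n i))
          ⊆ Set.Ico (0:ℝ) 1 := by
        intro z hz
        obtain ⟨hz1, hz2⟩ := hz
        constructor
        · refine le_trans ?_ hz1
          apply div_nonneg _ (hBpos i).le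
          exact_mod_cast (hgood i).1
        · refine lt_of_lt_of_le hz2 ?_
          rw [div_le_one (hBpos i)]
          have h2 : (c i : ℝ) + 1 ≤ ((b:ℝ)) ^ (n i) := by
            have := (hgood i).2
            have h3 : c i + 1 ≤ (b:ℤ) ^ (n i) := by omega
            have h4 : (((c i + 1 : ℤ)):ℝ) ≤ (((b:ℤ) ^ (n i) : ℤ):ℝ) := by exact_mod_cast h3
            push_cast at h4
            linarith
          linarith
      rw [Set.inter_eq_self_of_subset_left hsub, Real.volume_Ico]
      rw [show ((c i:ℝ)+1)/(b:ℝ)^(n i) - (c i:ℝ)/(b:ℝ)^(n i) = 1/(b:ℝ)^(n i) by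
        field_simp; ring]
      exact ofReal_one_div_pow hb (n i)
    rw [Finset.prod_congr rfl (fun i _ => hfac i), Finset.prod_pow_eq_pow_sum]
    -- the cylinder data
    set S : Finset ℕ :=
      ((Finset.univ : Finset (Fin k)).sigma (fun i => range (n i))).image
        (fun q : Σ _ : Fin k, ℕ => ψ (q.2, q.1)) with hSdef
    set e : ℕ → ℕ :=
      fun p => d ((ψ.symm p).2) / b ^ (n ((ψ.symm p).2) - 1 - (ψ.symm p).1) % b with hedef
    have hN : ∀ p ∈ S, p < S.sup id + 1 := by
      intro p hp
      have := Finset.le_sup (f := id) hp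
      simp only [id] at this
      omega
    have hCyl := measure_cylinder hb S hN e (fun p _ => Nat.mod_lt _ hb0)
    have hScard : S.card = ∑ i, n i := by
      rw [hSdef, Finset.card_image_of_injective _ ?hinj, Finset.card_sigma]
      · simp
      case hinj =>
        rintro ⟨i, m⟩ ⟨i', m'⟩ hqq
        have h2 := ψ.injective hqq
        simp only [Prod.mk.injEq] at h2
        obtain ⟨h3, h4⟩ := h2
        subst h4
        subst h3
        rfl
    set Z : Set ℝ := ⋃ i : Fin k,
      {x : ℝ | x ∈ Set.Ico (0:ℝ) 1 ∧ ∀ m, canonDigit b x (ψ (m + n i, i)) = b - 1} with hZdef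
    have hZ0 : volume Z = 0 := by
      rw [hZdef]
      refine measure_iUnion_null (fun i => measure_tail_zero hb (fun m => ψ (m + n i, i)) ?_)
      intro m m' hmm
      have := ψ.injective hmm
      simp only [Prod.mk.injEq] at this
      omega
    have hsplit : ∀ (x : ℝ) (i : Fin k), splitMap b k ψ x i
        = ((∑ m ∈ range (n i), canonDigit b x (ψ (m, i)) * b ^ (n i - 1 - m) : ℕ) : ℝ)
            / (b:ℝ)^(n i)
          + baseVal b (fun m => canonDigit b x (ψ (m + n i, i))) / (b:ℝ)^(n i) :=
      fun x i => baseVal_split hb (fun m => canonDigit_lt hb0 x _) (n i)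
    have htlt : ∀ (x : ℝ), x ∈ Set.Ico (0:ℝ) 1 → x ∉ Z → ∀ i : Fin k,
        baseVal b (fun m => canonDigit b x (ψ (m + n i, i))) < 1 := by
      intro x hx01 hxZ i
      have ha : ∀ m, canonDigit b x (ψ (m + n i, i)) < b := fun m => canonDigit_lt hb0 x _
      rcases lt_or_ge (baseVal b (fun m => canonDigit b x (ψ (m + n i, i)))) 1 with h | h
      · exact h
      · exfalso
        apply hxZ
        rw [hZdef]
        exact Set.mem_iUnion.mpr ⟨i, hx01, all_digits_eq_of_one_le hb ha h⟩
    have hincl1 : {x : ℝ | x ∈ Set.Ico (0:ℝ) 1 ∧ ∀ p ∈ S, canonDigit b x p = e p} \ Z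
        ⊆ splitMap b k ψ ⁻¹' Set.univ.pi s ∩ Set.Ico (0:ℝ) 1 := by
      rintro x ⟨⟨hx01, hdig⟩, hxZ⟩
      refine ⟨?_, hx01⟩
      rw [Set.mem_preimage, Set.mem_univ_pi]
      intro i
      rw [hsc i]
      have hdm : ∀ m, m < n i → canonDigit b x (ψ (m, i)) = d i / b ^ (n i - 1 - m) % b := by
        intro m hm
        have hpS : ψ (m, i) ∈ S := by
          rw [hSdef]
          exact Finset.mem_image.mpr ⟨⟨i, m⟩,
            Finset.mem_sigma.mpr ⟨Finset.mem_univ _, Finset.mem_range.mpr hm⟩, rfl⟩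
        have hh := hdig _ hpS
        rw [hedef] at hh
        simpa using hh
      have hKd : (∑ m ∈ range (n i), canonDigit b x (ψ (m, i)) * b ^ (n i - 1 - m)) = d i := by
        rw [Finset.sum_congr rfl (fun m hm => by rw [hdm m (Finset.mem_range.mp hm)])]
        exact big_digits_reconstruct (hdlt i)
      have ht0 : 0 ≤ baseVal b (fun m => canonDigit b x (ψ (m + n i, i))) := baseVal_nonneg
      have ht1 := htlt x hx01 hxZ i
      rw [hsplit x i, hKd]
      have hBp := hBpos i
      constructor
      · rw [hdR i]
        have hnn : (0:ℝ) ≤ baseVal b (fun m => canonDigit b x (ψ (m + n i, i))) / (b:ℝ)^(n i) :=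
          div_nonneg ht0 hBp.le
        linarith
      · rw [hdR i, ← add_div]
        gcongr <;> linarith
    have hincl2 : splitMap b k ψ ⁻¹' Set.univ.pi s ∩ Set.Ico (0:ℝ) 1
        ⊆ {x : ℝ | x ∈ Set.Ico (0:ℝ) 1 ∧ ∀ p ∈ S, canonDigit b x p = e p} ∪ Z := by
      rintro x ⟨hpre, hx01⟩
      by_cases hxZ : x ∈ Z
      · exact Or.inr hxZ
      left
      refine ⟨hx01, ?_⟩
      intro p hp
      rw [hSdef] at hp
      obtain ⟨⟨i, m⟩, hmem, rfl⟩ := Finset.mem_image.mp hp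
      have hm : m < n i := Finset.mem_range.mp (Finset.mem_sigma.mp hmem).2
      have hv := hpre i (Set.mem_univ i)
      rw [hsc i, hsplit x i] at hv
      set K := ∑ m' ∈ range (n i), canonDigit b x (ψ (m', i)) * b ^ (n i - 1 - m') with hKdef
      set t := baseVal b (fun m' => canonDigit b x (ψ (m' + n i, i))) with htdef
      have hKlt : K < b ^ (n i) := big_digits_lt _ _ (fun m' => canonDigit_lt hb0 x _)
      have ht0 : 0 ≤ t := baseVal_nonneg
      have ht1 : t < 1 := htlt x hx01 hxZ i
      obtain ⟨hv1, hv2⟩ := hv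
      rw [hdR i] at hv1 hv2
      have hBp := hBpos i
      rw [← add_div, div_le_div_iff₀ hBp hBp] at hv1
      rw [← add_div, div_lt_div_iff₀ hBp hBp] at hv2
      have h1 : ((d i : ℕ):ℝ) ≤ (K:ℝ) + t := le_of_mul_le_mul_right hv1 hBp
      have h2 : (K:ℝ) + t < ((d i : ℕ):ℝ) + 1 := lt_of_mul_lt_mul_right hv2 hBp.le
      have hle1 : d i < K + 1 := by
        have : ((d i : ℕ):ℝ) < (K:ℝ) + 1 := by linarith
        exact_mod_cast this
      have hle2 : K < d i + 1 := by
        have : (K:ℝ) < ((d i : ℕ):ℝ) + 1 := by linarith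
        exact_mod_cast this
      have hKd : K = d i := by omega
      have hdig := big_digits_div_mod (n i) (fun m' => canonDigit b x (ψ (m', i)))
        (fun m' => canonDigit_lt hb0 x _) hm
      rw [hedef]
      simp only [Equiv.symm_apply_apply]
      rw [← hKd]
      rw [← hKdef] at hdig
      exact hdig.symm
    have hPeq : volume (splitMap b k ψ ⁻¹' Set.univ.pi s ∩ Set.Ico (0:ℝ) 1)
        = volume {x : ℝ | x ∈ Set.Ico (0:ℝ) 1 ∧ ∀ p ∈ S, canonDigit b x p = e p} := by
      apply le_antisymm
      · calc volume (splitMap b k ψ ⁻¹' Set.univ.pi s ∩ Set.Ico (0:ℝ) 1)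
            ≤ volume ({x : ℝ | x ∈ Set.Ico (0:ℝ) 1 ∧ ∀ p ∈ S, canonDigit b x p = e p} ∪ Z) :=
              measure_mono hincl2
          _ ≤ volume {x : ℝ | x ∈ Set.Ico (0:ℝ) 1 ∧ ∀ p ∈ S, canonDigit b x p = e p}
              + volume Z := measure_union_le _ _
          _ = volume {x : ℝ | x ∈ Set.Ico (0:ℝ) 1 ∧ ∀ p ∈ S, canonDigit b x p = e p} := by
              rw [hZ0, add_zero]
      · calc volume {x : ℝ | x ∈ Set.Ico (0:ℝ) 1 ∧ ∀ p ∈ S, canonDigit b x p = e p}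
            = volume ({x : ℝ | x ∈ Set.Ico (0:ℝ) 1 ∧ ∀ p ∈ S, canonDigit b x p = e p} \ Z) :=
              (measure_diff_null hZ0).symm
          _ ≤ volume (splitMap b k ψ ⁻¹' Set.univ.pi s ∩ Set.Ico (0:ℝ) 1) :=
              measure_mono hincl1
    rw [hPeq, hCyl, hScard]
  · -- some interval is (essentially) outside [0,1)
    push_neg at hgood
    obtain ⟨i0, hi0⟩ := hgood
    have hbad : c i0 < 0 ∨ (b:ℤ) ^ (n i0) ≤ c i0 := by
      by_cases h1 : 0 ≤ c i0
      · exact Or.inr (hi0 h1)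
      · exact Or.inl (by omega)
    have hfac : (volume.restrict (Set.Ico (0:ℝ) 1)) (s i0) = 0 := by
      rw [hsc i0, Measure.restrict_apply measurableSet_Ico]
      have hempty : Set.Ico ((c i0:ℝ)/(b:ℝ)^(n i0)) (((c i0:ℝ)+1)/(b:ℝ)^(n i0))
          ∩ Set.Ico (0:ℝ) 1 = ∅ := by
        ext z
        simp only [Set.mem_inter_iff, Set.mem_Ico, Set.mem_empty_iff_false, iff_false]
        rintro ⟨⟨hz1, hz2⟩, hz3, hz4⟩
        rcases hbad with h | h
        · have hc1 : (c i0 : ℝ) + 1 ≤ 0 := by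
            have : c i0 + 1 ≤ 0 := by omega
            exact_mod_cast this
          have : ((c i0:ℝ)+1)/(b:ℝ)^(n i0) ≤ 0 :=
            div_nonpos_iff.mpr (Or.inr ⟨hc1, (hBpos i0).le⟩)
          linarith
        · have hc1 : ((b:ℝ)) ^ (n i0) ≤ (c i0 : ℝ) := by
            have h4 : (((b:ℤ) ^ (n i0) : ℤ):ℝ) ≤ ((c i0 : ℤ):ℝ) := by exact_mod_cast h
            push_cast at h4
            linarith
          have : (1:ℝ) ≤ (c i0:ℝ)/(b:ℝ)^(n i0) := by
            rw [le_div_iff₀ (hBpos i0)]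
            linarith
          linarith
      rw [hempty]
      exact measure_empty
    rw [Finset.prod_eq_zero (Finset.mem_univ i0) hfac]
    -- LHS is 0 as well
    rcases hbad with h | h
    · -- empty preimage
      have hemp : splitMap b k ψ ⁻¹' Set.univ.pi s ∩ Set.Ico (0:ℝ) 1 = ∅ := by
        ext x
        simp only [Set.mem_inter_iff, Set.mem_preimage, Set.mem_empty_iff_false, iff_false]
        rintro ⟨hpre, hx01⟩
        have hv := hpre i0 (Set.mem_univ i0)
        rw [hsc i0] at hv
        have h0 : 0 ≤ splitMap b k ψ x i0 := baseVal_nonneg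
        have hc1 : (c i0 : ℝ) + 1 ≤ 0 := by
          have : c i0 + 1 ≤ 0 := by omega
          exact_mod_cast this
        have : ((c i0:ℝ)+1)/(b:ℝ)^(n i0) ≤ 0 :=
          div_nonpos_iff.mpr (Or.inr ⟨hc1, (hBpos i0).le⟩)
        have := hv.2
        linarith
      rw [hemp]
      exact measure_empty
    · apply le_antisymm _ zero_le
      rw [← measure_tail_zero hb (fun m => ψ (m, i0))
        (fun m m' hmm => by
          have := ψ.injective hmm
          simpa using congrArg Prod.fst this)]
      apply measure_mono
      rintro x ⟨hpre, hx01⟩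
      have hv := hpre i0 (Set.mem_univ i0)
      rw [hsc i0] at hv
      have ha : ∀ m, canonDigit b x (ψ (m, i0)) < b := fun m => canonDigit_lt hb0 x _
      have h1 : splitMap b k ψ x i0 ≤ 1 := baseVal_le_one hb ha
      have hc1 : ((b:ℝ)) ^ (n i0) ≤ (c i0 : ℝ) := by
        have h4 : (((b:ℤ) ^ (n i0) : ℤ):ℝ) ≤ ((c i0 : ℤ):ℝ) := by exact_mod_cast h
        push_cast at h4
        linarith
      have hge1 : (1:ℝ) ≤ (c i0:ℝ)/(b:ℝ)^(n i0) := by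
        rw [le_div_iff₀ (hBpos i0)]
        have : (1:ℝ) ≤ (b:ℝ) ^ (n i0) := one_le_pow₀ (by linarith)
        linarith
      have hval : (1:ℝ) ≤ splitMap b k ψ x i0 := le_trans hge1 hv.1
      exact ⟨hx01, all_digits_eq_of_one_le hb ha hval⟩
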